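/- Let p, q > 3 be integers with (p-2)(q-2) > 4 and let b be defined by b₁ = q(p-3) together with the tree recursion (a₁ = q, a_{i+1} = (q-3)a_i + (q-2)b_i, b_{i+1} = ((q-3)(p-3)-1)a_i + ((q-2)(p-3)-1)b_i). Then lim_{i→∞} b_i / (∑_{j=1}^{i} b_j) = (z₁ - 1)/z₁, where z₁ = (c+√(c²-4))/2 and c = (p-2)(q-2)-2. -/

import Mathlib

open Filter
set_option maxHeartbeats 800000

theorem stmt_8 (p q : ℤ) (hp : 3 < p) (hq : 3 < q) (hpq : 4 < (p - 2) * (q - 2))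
    (a b : ℕ → ℝ) (ha1 : a 1 = q) (hb1 : b 1 = q * ((p : ℝ) - 3))
    (ha : ∀ i ≥ 1, a (i + 1) = ((q : ℝ) - 3) * a i + ((q : ℝ) - 2) * b i)
    (hb : ∀ i ≥ 1, b (i + 1) = (((q : ℝ) - 3) * ((p : ℝ) - 3) - 1) * a i
        + (((q : ℝ) - 2) * ((p : ℝ) - 3) - 1) * b i)
    (c : ℝ) (hc : c = ((p : ℝ) - 2) * ((q : ℝ) - 2) - 2)
    (z₁ : ℝ) (hz₁ : z₁ = (c + Real.sqrt (c ^ 2 - 4)) / 2) :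
    Tendsto (fun i => b i / ∑ j ∈ Finset.Icc 1 i, b j) atTop (nhds ((z₁ - 1) / z₁)) := by
  have hp' : (4:ℝ) ≤ (p:ℝ) := by exact_mod_cast hp
  have hq' : (4:ℝ) ≤ (q:ℝ) := by exact_mod_cast hq
  have hpq' : (4:ℝ) < ((p:ℝ) - 2) * ((q:ℝ) - 2) := by exact_mod_cast hpq
  have hc2 : (2:ℝ) < c := by rw [hc]; linarith
  obtain ⟨s, hs⟩ : ∃ s : ℝ, s = Real.sqrt (c ^ 2 - 4) := ⟨_, rfl⟩
  rw [← hs] at hz₁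
  have hs0 : 0 < s := hs ▸ Real.sqrt_pos.mpr (by nlinarith)
  have hs2 : s ^ 2 = c ^ 2 - 4 := hs ▸ Real.sq_sqrt (by nlinarith)
  have hsc : s < c := by nlinarith
  have hz1 : 1 < z₁ := by rw [hz₁]; nlinarith
  obtain ⟨w, hw⟩ : ∃ w : ℝ, w = (c - s) / 2 := ⟨_, rfl⟩
  have hw0 : 0 < w := by rw [hw]; linarith
  have hzw : z₁ * w = 1 := by
    rw [hz₁, hw]; linear_combination (-(1:ℝ)/4) * hs2
  have hw1 : w < 1 := by nlinarith
  have hz1w : w < z₁ := by nlinarith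
  have hzq : z₁ ^ 2 = c * z₁ - 1 := by
    rw [hz₁]; linear_combination ((1:ℝ)/4) * hs2
  have hwq : w ^ 2 = c * w - 1 := by
    rw [hw]; linear_combination ((1:ℝ)/4) * hs2
  have hz0 : (0:ℝ) < z₁ := by linarith
  have hzne : z₁ ≠ 0 := ne_of_gt hz0
  have hwne : w ≠ 0 := ne_of_gt hw0
  have hswne : z₁ - w ≠ 0 := sub_ne_zero.mpr hz1w.ne'
  have hz1ne : z₁ - 1 ≠ 0 := sub_ne_zero.mpr hz1.ne'
  have hw1ne : w - 1 ≠ 0 := by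
    intro h; rw [sub_eq_zero] at h; exact absurd h (ne_of_lt hw1)
  -- values of b 1, b 2
  have hb1pos : 0 < b 1 := by rw [hb1]; nlinarith
  have hb2 : b 2 = (((q:ℝ) - 3) * ((p:ℝ) - 3) - 1) * q
      + (((q:ℝ) - 2) * ((p:ℝ) - 3) - 1) * (q * ((p:ℝ) - 3)) := by
    have h := hb 1 le_rfl
    rw [ha1, hb1] at h
    exact h
  have hb2ge : b 1 ≤ b 2 := by
    rw [hb1, hb2]
    linarith [mul_nonneg (by nlinarith : (0:ℝ) ≤ ((q:ℝ) - 3) * ((p:ℝ) - 3) - 1)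
        (by linarith : (0:ℝ) ≤ (q:ℝ)),
      mul_nonneg (by nlinarith : (0:ℝ) ≤ ((q:ℝ) - 2) * ((p:ℝ) - 3) - 2)
        (by nlinarith : (0:ℝ) ≤ (q:ℝ) * ((p:ℝ) - 3))]
  -- coefficients of closed form
  obtain ⟨A, hA⟩ : ∃ A : ℝ, A = (b 2 - w * b 1) / (z₁ * (z₁ - w)) := ⟨_, rfl⟩
  obtain ⟨B, hB⟩ : ∃ B : ℝ, B = (z₁ * b 1 - b 2) / (w * (z₁ - w)) := ⟨_, rfl⟩
  have hApos : 0 < A := by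
    rw [hA]
    apply div_pos
    · nlinarith
    · have : 0 < z₁ - w := by linarith
      positivity
  have hAne : A ≠ 0 := ne_of_gt hApos
  have hF1 : b 1 = A * z₁ ^ 1 + B * w ^ 1 := by
    rw [hA, hB]; field_simp; ring
  have hF2 : b 2 = A * z₁ ^ 2 + B * w ^ 2 := by
    rw [hA, hB]; field_simp; ring
  -- two-step recurrence
  have hrec : ∀ i ≥ 1, b (i + 2) = c * b (i + 1) - b i := by
    intro i hi
    have h1 := hb (i + 1) (by omega)
    have e : i + 1 + 1 = i + 2 := by omega
    rw [e] at h1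
    rw [h1, ha i hi, hb i hi, hc]
    ring
  -- closed form
  have hF : ∀ i ≥ 1, b i = A * z₁ ^ i + B * w ^ i := by
    have key : ∀ k : ℕ, b (k + 1) = A * z₁ ^ (k + 1) + B * w ^ (k + 1)
        ∧ b (k + 2) = A * z₁ ^ (k + 2) + B * w ^ (k + 2) := by
      intro k
      induction k with
      | zero => exact ⟨hF1, hF2⟩
      | succ n ih =>
        refine ⟨ih.2, ?_⟩
        have h3 : n + 1 + 2 = n + 3 := by omega
        have h2 : n + 3 = (n + 1) + 2 := by omega
        rw [h3, h2, hrec (n + 1) (by omega), ih.1, ih.2]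
        have e1 : n + 1 + 2 = n + 1 + 1 + 1 := by omega
        rw [e1]
        linear_combination (-(A * z₁ ^ (n + 1))) * hzq + (-(B * w ^ (n + 1))) * hwq
    intro i hi
    obtain ⟨k, rfl⟩ : ∃ k, i = k + 1 := ⟨i - 1, by omega⟩
    exact (key k).1
  -- sum closed form
  have hS : ∀ i : ℕ, (∑ j ∈ Finset.Icc 1 i, b j)
      = A * z₁ * (z₁ ^ i - 1) / (z₁ - 1) + B * w * (w ^ i - 1) / (w - 1) := by
    intro i
    induction i with
    | zero => simp
    | succ n ih =>
      rw [Finset.sum_Icc_succ_top (by omega : 1 ≤ n + 1), ih, hF (n + 1) (by omega)]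
      field_simp
      ring
  -- limits
  have hr1 : Tendsto (fun i : ℕ => (1 / z₁) ^ i) atTop (nhds 0) :=
    tendsto_pow_atTop_nhds_zero_of_lt_one (by positivity)
      (by rw [div_lt_one hz0]; linarith)
  have hr2 : Tendsto (fun i : ℕ => (w / z₁) ^ i) atTop (nhds 0) :=
    tendsto_pow_atTop_nhds_zero_of_lt_one (by positivity)
      (by rw [div_lt_one hz0]; linarith)
  have T1 : Tendsto (fun i : ℕ => b i / z₁ ^ i) atTop (nhds A) := by
    have h : Tendsto (fun i : ℕ => A + B * (w / z₁) ^ i) atTop (nhds (A + B * 0)) :=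
      tendsto_const_nhds.add (hr2.const_mul B)
    rw [mul_zero, add_zero] at h
    apply h.congr'
    filter_upwards [eventually_ge_atTop 1] with i hi
    rw [hF i hi, div_pow]
    field_simp
  have T2 : Tendsto (fun i : ℕ => (∑ j ∈ Finset.Icc 1 i, b j) / z₁ ^ i) atTop
      (nhds (A * z₁ / (z₁ - 1))) := by
    have h : Tendsto (fun i : ℕ =>
        A * z₁ * (1 - (1 / z₁) ^ i) / (z₁ - 1)
          + B * w * ((w / z₁) ^ i - (1 / z₁) ^ i) / (w - 1)) atTop
        (nhds (A * z₁ * (1 - 0) / (z₁ - 1) + B * w * ((0:ℝ) - 0) / (w - 1))) := by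
      exact (((tendsto_const_nhds.sub hr1).const_mul _).div_const _).add
        (((hr2.sub hr1).const_mul _).div_const _)
    have e : A * z₁ * (1 - (0:ℝ)) / (z₁ - 1) + B * w * ((0:ℝ) - 0) / (w - 1)
        = A * z₁ / (z₁ - 1) := by ring
    rw [e] at h
    apply h.congr
    intro i
    rw [hS i, div_pow, div_pow]
    field_simp
    ring
  have hLne : A * z₁ / (z₁ - 1) ≠ 0 := by
    apply div_ne_zero (mul_ne_zero hAne hzne) hz1ne
  have hfinal := T1.div T2 hLne
  have heq : A / (A * z₁ / (z₁ - 1)) = (z₁ - 1) / z₁ := by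
    field_simp
  rw [heq] at hfinal
  apply hfinal.congr
  intro i
  simp only [Pi.div_apply]
  rcases eq_or_ne (∑ j ∈ Finset.Icc 1 i, b j) 0 with h | h
  · rw [h, zero_div, div_zero, div_zero]
  · rw [div_div_div_cancel_right₀]
    exact pow_ne_zero _ hzne
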